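/- arXiv:2402.07457 — 2 statements merged into one kernel-verified Lean document; each statement's English description precedes it below -/
import Mathlib

section
/- The n-th order kernel function of the Dirichlet space of the unit disc based at ζ is given explicitly by M_n(ξ, ζ) = ((n−1)!/π) · (ξ − ζ)^n / ((1 − conj(ζ)·ξ)^n · (1 − |ζ|²)^n); i.e., the function ξ ↦ M_n(ξ, ζ) is holomorphic on D, vanishes to order n at ζ, and its derivative in ξ equals K_n(ξ, ζ) = (n!/π) · φ_ζ(ξ)^{n-1} φ_ζ'(ξ) / conj(φ_ζ'(0))^n. -/
open Complex Metric

/-- The Möbius map `φ_ζ(z) = (ζ - z)/(1 - z·conj ζ)`. -/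
noncomputable def moebius (ζ z : ℂ) : ℂ := (ζ - z) / (1 - z * starRingEnd ℂ ζ)

/-- The `n`-th order kernel function of the Dirichlet space of the unit disc:
`M_n(ξ, ζ) = ((n-1)!/π) (ξ - ζ)^n / ((1 - conj ζ ξ)^n (1 - |ζ|²)^n)`. -/
noncomputable def Mker (n : ℕ) (ξ ζ : ℂ) : ℂ :=
  (((n - 1).factorial : ℂ) / (Real.pi : ℂ)) * (ξ - ζ) ^ n /
    ((1 - starRingEnd ℂ ζ * ξ) ^ n * (1 - (‖ζ‖ : ℂ) ^ 2) ^ n)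

lemma one_sub_ne_of_abs_lt {w : ℂ} (h : ‖w‖ < 1) : (1 : ℂ) - w ≠ 0 := by
  intro hw
  have : w = 1 := by linear_combination -hw
  simp [this] at h

lemma analyticAt_deriv {f : ℂ → ℂ} {x : ℂ} (h : AnalyticAt ℂ f x) :
    AnalyticAt ℂ (deriv f) x := by
  have : AnalyticAt ℂ (fun z => fderiv ℂ f z 1) x :=
    ((ContinuousLinearMap.apply ℂ ℂ (1 : ℂ)).analyticAt _).comp h.fderiv
  exact this.congr (by filter_upwards with z using (fderiv_apply_one_eq_deriv).symm) |>.congr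
    (Filter.EventuallyEq.refl _ _)

lemma vanish_aux (ζ : ℂ) :
    ∀ k m (h : ℂ → ℂ), k ≤ m → AnalyticAt ℂ h ζ →
      iteratedDeriv k (fun z => (z - ζ) ^ (m + 1) * h z) ζ = 0 := by
  intro k
  induction k with
  | zero => intro m h _ _; simp
  | succ k ih =>
    intro m h hkm hh
    obtain ⟨m', rfl⟩ : ∃ m', m = m' + 1 := ⟨m - 1, by omega⟩
    rw [iteratedDeriv_succ']
    have heq : deriv (fun z => (z - ζ) ^ (m' + 1 + 1) * h z) =ᶠ[nhds ζ]
        fun z => (z - ζ) ^ (m' + 1) * (((m' + 2 : ℕ) : ℂ) * h z + (z - ζ) * deriv h z) := by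
      filter_upwards [hh.eventually_analyticAt] with z hz
      have h1 : HasDerivAt (fun z : ℂ => (z - ζ) ^ (m' + 2))
          ((((m' + 2 : ℕ) : ℂ)) * (z - ζ) ^ (m' + 1) * 1) z := by
        simpa using ((hasDerivAt_id z).sub_const ζ).fun_pow (m' + 2)
      have h2 : HasDerivAt h (deriv h z) z := hz.differentiableAt.hasDerivAt
      rw [(h1.fun_mul h2).deriv]
      ring
    rw [heq.iteratedDeriv_eq]
    exact ih m' _ (by omega)
      ((analyticAt_const.mul hh).add ((analyticAt_id.sub analyticAt_const).mul (analyticAt_deriv hh)))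

/-- The explicit formula `M_n(ξ,ζ)` gives the `n`-th order kernel function of the Dirichlet
space of the unit disc: it is holomorphic in `ξ` on `D`, vanishes to order `n` at `ζ`, and
its `ξ`-derivative equals `K_n(ξ,ζ) = (n!/π) φ_ζ(ξ)^{n-1} φ_ζ'(ξ)/conj(φ_ζ'(0))^n`. -/
theorem Mker_is_nth_order_kernel (n : ℕ) (hn : 0 < n) (ζ : ℂ) (hζ : ζ ∈ ball (0 : ℂ) 1) :
    DifferentiableOn ℂ (fun ξ => Mker n ξ ζ) (ball (0 : ℂ) 1) ∧
    (∀ k < n, iteratedDeriv k (fun ξ => Mker n ξ ζ) ζ = 0) ∧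
    ∀ ξ ∈ ball (0 : ℂ) 1,
      deriv (fun ξ => Mker n ξ ζ) ξ =
        ((n.factorial : ℂ) / (Real.pi : ℂ)) * (moebius ζ ξ) ^ (n - 1) *
          deriv (moebius ζ) ξ / (starRingEnd ℂ (deriv (moebius ζ) 0)) ^ n := by
  have hζ1 : ‖ζ‖ < 1 := by simpa [Complex.dist_eq] using hζ
  set c : ℂ := starRingEnd ℂ ζ with hc
  have hcabs : ‖c‖ = ‖ζ‖ := Complex.norm_conj ζ
  have hnorm : ((‖ζ‖ : ℂ)) ^ 2 = c * ζ := by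
    rw [hc, mul_comm, Complex.mul_conj]
    norm_cast
    exact Complex.sq_norm ζ
  have hB : (1 : ℂ) - (‖ζ‖ : ℂ) ^ 2 ≠ 0 := by
    apply one_sub_ne_of_abs_lt
    rw [norm_pow, Complex.norm_real, Real.norm_of_nonneg (norm_nonneg ζ)]
    nlinarith [norm_nonneg ζ]
  have hBζ : (1 : ℂ) - c * ζ ≠ 0 := by rw [← hnorm]; exact hB
  -- 1 - c * ξ ≠ 0 for ξ in the ball
  have hdenom : ∀ ξ ∈ ball (0 : ℂ) 1, (1 : ℂ) - c * ξ ≠ 0 := by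
    intro ξ hξ
    have hξ1 : ‖ξ‖ < 1 := by simpa [Complex.dist_eq] using hξ
    apply one_sub_ne_of_abs_lt
    rw [norm_mul, hcabs]
    nlinarith [norm_nonneg ξ, norm_nonneg ζ]
  -- Derivative of Mker at points with nonvanishing denominator
  have hder : ∀ ξ : ℂ, (1 : ℂ) - c * ξ ≠ 0 →
      HasDerivAt (fun ξ => Mker n ξ ζ)
        (((((n - 1).factorial : ℂ) / (Real.pi : ℂ)) * ((n : ℂ) * (ξ - ζ) ^ (n - 1)) *
            ((1 - c * ξ) ^ n * (1 - (‖ζ‖ : ℂ) ^ 2) ^ n) -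
          (((n - 1).factorial : ℂ) / (Real.pi : ℂ)) * (ξ - ζ) ^ n *
            (((n : ℂ) * (1 - c * ξ) ^ (n - 1) * (0 - c)) * (1 - (‖ζ‖ : ℂ) ^ 2) ^ n)) /
          ((1 - c * ξ) ^ n * (1 - (‖ζ‖ : ℂ) ^ 2) ^ n) ^ 2) ξ := by
    intro ξ hdξ
    have hN : HasDerivAt (fun ξ : ℂ => (((n - 1).factorial : ℂ) / (Real.pi : ℂ)) * (ξ - ζ) ^ n)
        ((((n - 1).factorial : ℂ) / (Real.pi : ℂ)) * ((n : ℂ) * (ξ - ζ) ^ (n - 1))) ξ := by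
      simpa using (((hasDerivAt_id ξ).sub_const ζ).fun_pow n).const_mul
        ((((n - 1).factorial : ℂ) / (Real.pi : ℂ)))
    have hD0 : HasDerivAt (fun ξ : ℂ => 1 - c * ξ) (0 - c) ξ := by
      simpa using (hasDerivAt_const ξ (1 : ℂ)).fun_sub ((hasDerivAt_id ξ).const_mul c)
    have hD : HasDerivAt (fun ξ : ℂ => (1 - c * ξ) ^ n * (1 - (‖ζ‖ : ℂ) ^ 2) ^ n)
        (((n : ℂ) * (1 - c * ξ) ^ (n - 1) * (0 - c)) * (1 - (‖ζ‖ : ℂ) ^ 2) ^ n) ξ :=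
      (hD0.pow n).mul_const _
    exact hN.div hD (mul_ne_zero (pow_ne_zero _ hdξ) (pow_ne_zero _ hB))
  refine ⟨?_, ?_, ?_⟩
  · intro ξ hξ
    exact ((hder ξ (hdenom ξ hξ)).differentiableAt).differentiableWithinAt
  · -- vanishing to order n at ζ
    intro k hk
    obtain ⟨m, rfl⟩ : ∃ m, n = m + 1 := ⟨n - 1, by omega⟩
    have hMeq : (fun ξ => Mker (m + 1) ξ ζ) =
        fun ξ => (ξ - ζ) ^ (m + 1) *
          ((((m + 1 - 1).factorial : ℂ) / (Real.pi : ℂ)) /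
            ((1 - c * ξ) ^ (m + 1) * (1 - (‖ζ‖ : ℂ) ^ 2) ^ (m + 1))) := by
      funext ξ
      simp only [Mker]
      push_cast
      ring
    rw [hMeq]
    apply vanish_aux ζ k m _ (by omega)
    apply AnalyticAt.div analyticAt_const
    · exact AnalyticAt.mul
        ((AnalyticAt.sub analyticAt_const (analyticAt_const.mul analyticAt_id)).pow _)
        analyticAt_const
    · exact mul_ne_zero (pow_ne_zero _ hBζ) (pow_ne_zero _ hB)
  · intro ξ hξ
    have hdξ := hdenom ξ hξ
    rw [(hder ξ hdξ).deriv]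
    -- compute derivatives of moebius
    have hmob : ∀ z : ℂ, (1 : ℂ) - z * c ≠ 0 →
        HasDerivAt (moebius ζ) ((ζ * c - 1) / (1 - z * c) ^ 2) z := by
      intro z hz
      have hu : HasDerivAt (fun z : ℂ => ζ - z) (-1) z := by
        simpa using (hasDerivAt_const z ζ).fun_sub (hasDerivAt_id z)
      have hv : HasDerivAt (fun z : ℂ => 1 - z * c) (0 - (1 * c)) z := by
        simpa using (hasDerivAt_const z (1 : ℂ)).fun_sub ((hasDerivAt_id z).mul_const c)
      have := hu.div hv hz
      apply this.congr_deriv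
      field_simp
      ring
    have hcm : (1 : ℂ) - ξ * c ≠ 0 := by rwa [mul_comm]
    have hmξ : deriv (moebius ζ) ξ = (ζ * c - 1) / (1 - ξ * c) ^ 2 := (hmob ξ hcm).deriv
    have h0 : (1 : ℂ) - (0 : ℂ) * c ≠ 0 := by simp
    have hm0 : deriv (moebius ζ) 0 = ζ * c - 1 := by
      rw [(hmob 0 h0).deriv]; simp
    have hconj : starRingEnd ℂ (deriv (moebius ζ) 0) = ζ * c - 1 := by
      rw [hm0]
      simp only [map_sub, map_mul, map_one, hc, Complex.conj_conj]
      ring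
    rw [hmξ, hconj]
    obtain ⟨m, rfl⟩ : ∃ m, n = m + 1 := ⟨n - 1, by omega⟩
    have hζc : ζ * c - 1 ≠ 0 := by
      intro h
      apply hBζ
      linear_combination -h
    simp only [Nat.add_sub_cancel, moebius, ← hc]
    rw [hnorm]
    have hfac : ((m + 1).factorial : ℂ) = ((m + 1 : ℕ) : ℂ) * (m.factorial : ℂ) := by
      push_cast [Nat.factorial_succ]; ring
    rw [hfac, div_pow]
    have hπ : (Real.pi : ℂ) ≠ 0 := by
      exact_mod_cast Complex.ofReal_ne_zero.mpr Real.pi_ne_zero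
    have h1c : (1 : ℂ) - c * ξ ≠ 0 := hdξ
    have hcm2 : (1 : ℂ) - ξ * c ≠ 0 := by rwa [mul_comm]
    rw [div_mul_div_comm, div_mul_div_comm, div_div, div_eq_div_iff
      (pow_ne_zero 2 (mul_ne_zero (pow_ne_zero _ h1c) (pow_ne_zero _ hBζ)))
      (mul_ne_zero (mul_ne_zero (mul_ne_zero hπ (pow_ne_zero _ hcm2)) (pow_ne_zero _ hcm2))
        (pow_ne_zero _ hζc))]
    have k1 : (ζ - ξ) ^ m = (-1 : ℂ) ^ m * (ξ - ζ) ^ m := by rw [← neg_pow, neg_sub]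
    have k2 : (ζ * c - 1) ^ (m + 1) = (-1 : ℂ) ^ (m + 1) * (1 - ζ * c) ^ (m + 1) := by
      rw [← neg_pow, neg_sub]
    rw [k1, k2, pow_succ]
    rcases Nat.even_or_odd m with he | ho
    · rw [he.neg_one_pow]
      field_simp
      rw [pow_succ (-1 : ℂ) m, he.neg_one_pow]
      ring
    · rw [ho.neg_one_pow]
      field_simp
      rw [pow_succ (-1 : ℂ) m, ho.neg_one_pow]
      ring
end

section
/- If μ is a positive measurable weight on a domain Ω ⊆ ℂ such that μ^{−a} is locally integrable for some a > 0, then μ is an admissible weight: for every compact K ⊂ Ω there is C_K > 0 with sup_{z∈K} |f(z)| ≤ C_K · (∫_Ω |f|² μ dA)^{1/2} for every holomorphic f ∈ L²(Ω, μ dA). -/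
open Complex MeasureTheory Metric


section AuxSubmean
open Real Set


lemma submean_circle (f : ℂ → ℂ) (c : ℂ) (ρ : ℝ) (hρ : 0 < ρ)
    (hf : DifferentiableOn ℂ f (closedBall c ρ)) :
    2 * π * ‖f c‖ ^ 2 ≤ ∫ θ in (0:ℝ)..(2 * π), ‖f (circleMap c ρ θ)‖ ^ 2 := by
  set g : ℂ → ℂ := fun z => f z * f z with hg
  have hgd : DifferentiableOn ℂ g (closedBall c ρ) := hf.mul hf
  have h := hgd.circleIntegral_sub_inv_smul (mem_ball_self hρ)
  rw [circleIntegral] at h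
  have key : ∫ θ in (0:ℝ)..(2 * π), g (circleMap c ρ θ) = (2 * π : ℝ) * g c := by
    have e : ∀ θ : ℝ, deriv (circleMap c ρ) θ • (circleMap c ρ θ - c)⁻¹ • g (circleMap c ρ θ)
        = I * g (circleMap c ρ θ) := by
      intro θ
      have hne : circleMap 0 ρ θ ≠ 0 := by
        simpa using circleMap_ne_center (c := 0) hρ.ne' (θ := θ)
      rw [deriv_circleMap, circleMap_sub_center, smul_eq_mul, smul_eq_mul]
      field_simp
    simp_rw [e] at h
    rw [intervalIntegral.integral_const_mul] at h
    have h2 : I * ∫ θ in (0:ℝ)..(2 * π), g (circleMap c ρ θ)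
        = I * ((2 * π : ℝ) * g c) := by
      rw [h, smul_eq_mul]; push_cast; ring
    exact mul_left_cancel₀ I_ne_zero h2
  have hb : ‖∫ θ in (0:ℝ)..(2 * π), g (circleMap c ρ θ)‖
      ≤ ∫ θ in (0:ℝ)..(2 * π), ‖g (circleMap c ρ θ)‖ :=
    intervalIntegral.norm_integral_le_integral_norm (by positivity)
  rw [key] at hb
  have e1 : ‖((2 * π : ℝ) : ℂ) * g c‖ = 2 * π * ‖f c‖ ^ 2 := by
    rw [norm_mul, Complex.norm_real, hg]
    simp only [abs_of_pos Real.two_pi_pos, norm_mul, sq, mul_assoc]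
    simp [Real.norm_eq_abs, abs_of_pos Real.pi_pos]
  have e2 : ∀ θ : ℝ, ‖g (circleMap c ρ θ)‖ = ‖f (circleMap c ρ θ)‖ ^ 2 := by
    intro θ; rw [hg]; simp [norm_mul, sq]
  calc 2 * π * ‖f c‖ ^ 2 = ‖((2 * π : ℝ) : ℂ) * g c‖ := e1.symm
    _ ≤ ∫ θ in (0:ℝ)..(2 * π), ‖g (circleMap c ρ θ)‖ := hb
    _ = ∫ θ in (0:ℝ)..(2 * π), ‖f (circleMap c ρ θ)‖ ^ 2 := by simp_rw [e2]

private lemma submean_ball (f : ℂ → ℂ) (c : ℂ) (R : ℝ) (hR : 0 < R)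
    (hf : DifferentiableOn ℂ f (closedBall c R)) :
    π * R ^ 2 * ‖f c‖ ^ 2 ≤ ∫ w in ball c R, ‖f w‖ ^ 2 := by
  set h : ℝ × ℝ → ℝ := fun p => p.1 * ‖f (circleMap c p.1 p.2)‖ ^ 2 with hh
  set box : Set (ℝ × ℝ) := Ioo (0:ℝ) R ×ˢ Ioo (-π) π with hbox
  -- continuity of h on the compact rectangle
  have hmc : Continuous (fun p : ℝ × ℝ => circleMap c p.1 p.2) := by
    unfold circleMap
    fun_prop
  have hmaps : MapsTo (fun p : ℝ × ℝ => circleMap c p.1 p.2)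
      (Icc (0:ℝ) R ×ˢ Icc (-π) π) (closedBall c R) := by
    rintro ⟨ρ, θ⟩ ⟨hρ, -⟩
    simp only [mem_closedBall, dist_eq_norm, circleMap_sub_center,
      norm_circleMap_zero]
    exact le_trans (abs_le_abs hρ.2 (by linarith [hρ.1])) (le_of_eq (abs_of_nonneg (by linarith [hρ.1, hρ.2])))
  have hcont : ContinuousOn h (Icc (0:ℝ) R ×ˢ Icc (-π) π) := by
    apply (continuous_fst.continuousOn).mul
    exact (((hf.continuousOn.comp hmc.continuousOn hmaps).norm).pow 2)
  have hIntIcc : IntegrableOn h (Icc (0:ℝ) R ×ˢ Icc (-π) π) volume :=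
    hcont.integrableOn_compact (isCompact_Icc.prod isCompact_Icc)
  have hInt : IntegrableOn h box volume :=
    hIntIcc.mono_set (prod_mono Ioo_subset_Icc_self Ioo_subset_Icc_self)
  -- step 1: rewrite the ball integral as an integral over box via polar coordinates
  have step1 : ∫ w in ball c R, ‖f w‖ ^ 2 = ∫ p in box, h p := by
    have e1 : ∫ w in ball c R, ‖f w‖ ^ 2
        = ∫ w, (ball (0:ℂ) R).indicator (fun w => ‖f (c + w)‖ ^ 2) w := by
      rw [← integral_indicator measurableSet_ball]
      rw [← integral_add_left_eq_self (μ := volume) _ c]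
      congr 1
      funext w
      by_cases hw : w ∈ ball (0:ℂ) R
      · rw [indicator_of_mem hw, indicator_of_mem]
        simpa [mem_ball, dist_eq_norm] using hw
      · rw [indicator_of_notMem hw, indicator_of_notMem]
        simpa [mem_ball, dist_eq_norm] using hw
    rw [e1, ← Complex.integral_comp_polarCoord_symm]
    have e2 : ∀ p ∈ polarCoord.target,
        p.1 • (ball (0:ℂ) R).indicator (fun w => ‖f (c + w)‖ ^ 2) (Complex.polarCoord.symm p)
        = box.indicator h p := by
      rintro ⟨ρ, θ⟩ ⟨hρ, hθ⟩
      simp only [Set.mem_Ioi] at hρ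
      have habs : ‖Complex.polarCoord.symm (ρ, θ)‖ = ρ := by
        rw [Complex.norm_polarCoord_symm]; exact abs_of_pos hρ
      have hcm : c + Complex.polarCoord.symm (ρ, θ) = circleMap c ρ θ := by
        rw [Complex.polarCoord_symm_apply, circleMap, Complex.exp_mul_I]
        push_cast
        ring
      by_cases hρR : ρ < R
      · have hmem : Complex.polarCoord.symm (ρ, θ) ∈ ball (0:ℂ) R := by
          simp [mem_ball, dist_eq_norm, habs, abs_of_pos hρ, hρR]
        rw [indicator_of_mem hmem, indicator_of_mem (show ((ρ,θ) : ℝ × ℝ) ∈ box from ⟨⟨hρ, hρR⟩, hθ⟩)]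
        show ρ • ‖f (c + Complex.polarCoord.symm (ρ, θ))‖ ^ 2 = ρ * ‖f (circleMap c ρ θ)‖ ^ 2
        rw [smul_eq_mul, hcm]
      · have hmem : Complex.polarCoord.symm (ρ, θ) ∉ ball (0:ℂ) R := by
          simp only [mem_ball, dist_eq_norm, sub_zero, habs]
          exact hρR
        rw [indicator_of_notMem hmem,
          indicator_of_notMem (by simp [hbox]; intro h1 h2; exact absurd h2 hρR)]
        simp
    rw [setIntegral_congr_fun (polarCoord.open_target.measurableSet) e2,
      setIntegral_indicator (by measurability)]
    congr 1
    rw [Set.inter_eq_right.mpr]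
    exact prod_mono (Ioo_subset_Ioi_self) (subset_rfl)
  rw [step1]
  -- step 2 : Fubini
  have hprodmeas : (volume : Measure (ℝ × ℝ)).restrict box
      = (volume.restrict (Ioo (0:ℝ) R)).prod (volume.restrict (Ioo (-π) π)) := by
    rw [Measure.prod_restrict, ← Measure.volume_eq_prod]
  have hInt2 : Integrable h ((volume.restrict (Ioo (0:ℝ) R)).prod (volume.restrict (Ioo (-π) π))) := by
    rwa [← hprodmeas]
  have step2 : ∫ p in box, h p
      = ∫ ρ in Ioo (0:ℝ) R, ∫ θ in Ioo (-π) π, h (ρ, θ) := by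
    rw [hprodmeas]
    exact integral_prod h hInt2
  rw [step2]
  -- step 3 : inner bound
  have inner_bound : ∀ ρ ∈ Ioo (0:ℝ) R,
      ρ * (2 * π * ‖f c‖ ^ 2) ≤ ∫ θ in Ioo (-π) π, h (ρ, θ) := by
    intro ρ hρ
    have hρ0 : 0 < ρ := hρ.1
    have e3 : ∫ θ in Ioo (-π) π, h (ρ, θ) = ρ * ∫ θ in Ioo (-π) π, ‖f (circleMap c ρ θ)‖ ^ 2 := by
      simp only [hh]
      rw [integral_const_mul]
    have e4 : ∫ θ in Ioo (-π) π, ‖f (circleMap c ρ θ)‖ ^ 2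
        = ∫ θ in (0:ℝ)..(2*π), ‖f (circleMap c ρ θ)‖ ^ 2 := by
      rw [← integral_Ioc_eq_integral_Ioo, ← intervalIntegral.integral_of_le (by linarith [pi_pos])]
      have hper : Function.Periodic (fun θ => ‖f (circleMap c ρ θ)‖ ^ 2) (2 * π) :=
        fun θ => by simp [periodic_circleMap c ρ θ]
      have := hper.intervalIntegral_add_eq (-π) 0
      simpa [show -π + 2*π = π by ring] using this
    rw [e3, e4]
    have := submean_circle f c ρ hρ0 (hf.mono (closedBall_subset_closedBall hρ.2.le))
    exact mul_le_mul_of_nonneg_left this hρ0.le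
  -- step 4 : outer integral
  have hIntOuter : IntegrableOn (fun ρ => ∫ θ in Ioo (-π) π, h (ρ, θ)) (Ioo (0:ℝ) R) volume := by
    have := hInt2.integral_prod_left
    exact this
  have hIntLeft : IntegrableOn (fun ρ => ρ * (2 * π * ‖f c‖ ^ 2)) (Ioo (0:ℝ) R) volume := by
    apply Integrable.mono_measure _ (Measure.restrict_mono Ioo_subset_Icc_self le_rfl)
    exact (continuousOn_id.mul continuousOn_const).integrableOn_compact isCompact_Icc
  have mono := setIntegral_mono_on hIntLeft hIntOuter measurableSet_Ioo inner_bound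
  refine le_trans (le_of_eq ?_) mono
  have : ∫ ρ in Ioo (0:ℝ) R, ρ * (2 * π * ‖f c‖ ^ 2)
      = (∫ ρ in Ioo (0:ℝ) R, ρ) * (2 * π * ‖f c‖ ^ 2) := by
    rw [integral_mul_const]
  rw [this]
  have : ∫ ρ in Ioo (0:ℝ) R, ρ = R ^ 2 / 2 := by
    rw [← integral_Ioc_eq_integral_Ioo, ← intervalIntegral.integral_of_le hR.le]
    simp [integral_id]
  rw [this]
  ring

end AuxSubmean

section MainProof
open Real Set

set_option maxHeartbeats 1000000 in
/-- If `μ` is a positive measurable weight on a domain `Ω ⊆ ℂ` with `μ^{-a}` locally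
integrable for some `a > 0`, then `μ` is admissible: for every compact `K ⊆ Ω` there is
`C > 0` with `sup_K |f| ≤ C ‖f‖_{L²_μ}` for every holomorphic `f ∈ L²_μ(Ω)`. -/
theorem admissible_of_locally_integrable_rpow (Ω : Set ℂ) (hΩ : IsOpen Ω)
    (hconn : IsConnected Ω) (μ : ℂ → ℝ) (hmeas : Measurable μ)
    (hpos : ∀ z ∈ Ω, 0 < μ z) (a : ℝ) (ha : 0 < a)
    (hloc : LocallyIntegrableOn (fun z => (μ z) ^ (-a)) Ω volume) :
    ∀ K : Set ℂ, IsCompact K → K ⊆ Ω →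
      ∃ C > 0, ∀ f : ℂ → ℂ, DifferentiableOn ℂ f Ω →
        IntegrableOn (fun z => ‖f z‖ ^ 2 * μ z) Ω volume →
        ∀ z ∈ K, ‖f z‖ ≤ C * Real.sqrt (∫ w in Ω, ‖f w‖ ^ 2 * μ w) := by
  intro K hK hKΩ
  rcases K.eq_empty_or_nonempty with rfl | hne
  · exact ⟨1, one_pos, fun f _ _ z hz => absurd hz (Set.notMem_empty z)⟩
  obtain ⟨δ, hδ, hcthΩ⟩ := hK.exists_cthickening_subset_open hΩ hKΩ
  set Q : Set ℂ := {w : ℂ | infDist w K ≤ δ} with hQdef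
  have hQeq : Q = cthickening δ K := by
    ext w
    simp only [hQdef, mem_setOf_eq, mem_cthickening_iff]
    rw [ENNReal.le_ofReal_iff_toReal_le (infEdist_ne_top hne) hδ.le]
    exact Iff.rfl
  have hQc : IsCompact Q := hQeq ▸ hK.cthickening
  have hQΩ : Q ⊆ Ω := hQeq ▸ hcthΩ
  have hQmeas : MeasurableSet Q := (hQeq ▸ isClosed_cthickening : IsClosed Q).measurableSet
  have hKQ : K ⊆ Q := fun z hz => by
    simp only [hQdef, mem_setOf_eq, infDist_zero_of_mem hz]; exact hδ.le
  -- constants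
  set b : ℝ := 2 + 2 / a with hb
  have hb0 : 0 < b := by positivity
  set I₀ : ℝ := ∫ w in Q, μ w ^ (-a) with hI₀
  have hIQ : IntegrableOn (fun z => μ z ^ (-a)) Q volume :=
    hloc.integrableOn_compact_subset hQΩ hQc
  have hI₀0 : 0 ≤ I₀ :=
    setIntegral_nonneg hQmeas fun w hw => Real.rpow_nonneg (hpos w (hQΩ hw)).le _
  have hbase : 0 < π / ((2:ℝ) ^ (b+1) * (I₀ + 1)) := by positivity
  set c₀ : ℝ := (π / ((2:ℝ) ^ (b+1) * (I₀ + 1))) ^ (1/a) with hc₀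
  have hc₀0 : 0 < c₀ := Real.rpow_pos_of_pos hbase _
  have hc₀a : c₀ ^ a = π / ((2:ℝ) ^ (b+1) * (I₀ + 1)) := by
    rw [hc₀, ← Real.rpow_mul hbase.le, one_div, inv_mul_cancel₀ ha.ne', Real.rpow_one]
  set C₁ : ℝ := (2:ℝ) ^ b / (π * c₀) with hC₁
  have hC₁0 : 0 < C₁ := by
    apply div_pos (Real.rpow_pos_of_pos two_pos _) (by positivity)
  have hδb : 0 < δ ^ b := Real.rpow_pos_of_pos hδ _
  refine ⟨Real.sqrt (2 * C₁ / δ ^ b), Real.sqrt_pos.mpr (by positivity), ?_⟩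
  intro f hfd hfint
  set L : ℝ := ∫ w in Ω, ‖f w‖ ^ 2 * μ w with hL
  have hL0 : 0 ≤ L :=
    setIntegral_nonneg hΩ.measurableSet fun w hw => by
      have := (hpos w hw).le; positivity
  -- the weighted sup
  set g : ℂ → ℝ := fun w => (δ - infDist w K) ^ b * ‖f w‖ ^ 2 with hg
  have hgc : ContinuousOn g Q := by
    apply ContinuousOn.mul
    · apply ContinuousOn.rpow_const
      · exact (continuous_const.sub (continuous_infDist_pt K)).continuousOn
      · exact fun x _ => Or.inr hb0.le
    · exact ((hfd.continuousOn.mono hQΩ).norm.pow 2)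
  obtain ⟨z₁, hz₁Q, hmax⟩ := hQc.exists_isMaxOn (hne.mono hKQ) hgc
  set S : ℝ := g z₁ with hS
  have hgnonneg : ∀ w ∈ Q, 0 ≤ g w := fun w hw => by
    have h1 : 0 ≤ δ - infDist w K := by
      have := hw; simp only [hQdef, mem_setOf_eq] at this; linarith
    positivity
  have hS0 : 0 ≤ S := le_trans (hgnonneg _ (hKQ hne.choose_spec)) (hmax (hKQ hne.choose_spec))
  have hz₁d : 0 ≤ δ - infDist z₁ K := by
    have := hz₁Q; simp only [hQdef, mem_setOf_eq] at this; linarith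
  -- key absorption inequality
  have key : S ≤ C₁ * L + S / 2 := by
    rcases eq_or_lt_of_le hz₁d with hd0 | hdpos
    · have : S = 0 := by
        simp only [hS, hg, ← hd0, Real.zero_rpow hb0.ne', zero_mul]
      rw [this]
      positivity
    set r : ℝ := (δ - infDist z₁ K) / 2 with hr
    have hr0 : 0 < r := by simp only [hr]; linarith
    have hballQ : closedBall z₁ r ⊆ Q := by
      intro w hw
      simp only [hQdef, mem_setOf_eq]
      have h1 : infDist w K ≤ infDist z₁ K + dist w z₁ := infDist_le_infDist_add_dist
      have h2 : dist w z₁ ≤ r := mem_closedBall.mp hw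
      simp only [hr] at h2 ⊢
      linarith
    have hfQ : DifferentiableOn ℂ f (closedBall z₁ r) := hfd.mono (hballQ.trans hQΩ)
    have hsub := submean_ball f z₁ r hr0 hfQ
    set P : ℝ := ‖f z₁‖ ^ 2 with hP
    set ε : ℝ := c₀ * r ^ (2/a) with hε
    have hε0 : 0 < ε := by positivity
    have hX0 : (0:ℝ) < r ^ (2/a) := Real.rpow_pos_of_pos hr0 _
    have hrb0 : (0:ℝ) < r ^ b := Real.rpow_pos_of_pos hr0 _
    have hr2 : r ^ (2:ℝ) = r ^ 2 := by
      rw [show ((2:ℝ) = ((2:ℕ):ℝ)) by norm_num, Real.rpow_natCast]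
    have hrbsplit : r ^ b = r ^ 2 * r ^ (2/a) := by
      rw [hb, Real.rpow_add hr0, hr2]
    have hεa : ε ^ a = c₀ ^ a * r ^ 2 := by
      rw [hε, Real.mul_rpow hc₀0.le hX0.le, ← Real.rpow_mul hr0.le,
        div_mul_cancel₀ _ ha.ne', hr2]
    -- split the ball integral
    set A : Set ℂ := ball z₁ r ∩ {w | ε ≤ μ w} with hA
    set B : Set ℂ := ball z₁ r ∩ {w | μ w < ε} with hB
    have hAmeas : MeasurableSet A := measurableSet_ball.inter (measurableSet_le measurable_const hmeas)
    have hBmeas : MeasurableSet B := measurableSet_ball.inter (measurableSet_lt hmeas measurable_const)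
    have hAB : A ∪ B = ball z₁ r := by
      ext w; simp only [hA, hB, mem_union, mem_inter_iff, mem_setOf_eq]
      constructor
      · rintro (⟨h, -⟩ | ⟨h, -⟩) <;> exact h
      · intro h; rcases le_or_gt ε (μ w) with h' | h'
        · exact Or.inl ⟨h, h'⟩
        · exact Or.inr ⟨h, h'⟩
    have hdisj : Disjoint A B := by
      rw [Set.disjoint_left]
      rintro w hwA hwB
      have h1 : ε ≤ μ w := hwA.2
      have h2 : μ w < ε := hwB.2
      exact absurd h2 (not_lt.mpr h1)
    have hf2int : IntegrableOn (fun w => ‖f w‖ ^ 2) (closedBall z₁ r) volume :=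
      ((hfQ.continuousOn.norm.pow 2)).integrableOn_compact (isCompact_closedBall _ _)
    have hAsub : A ⊆ closedBall z₁ r := (Set.inter_subset_left).trans ball_subset_closedBall
    have hBsub : B ⊆ closedBall z₁ r := (Set.inter_subset_left).trans ball_subset_closedBall
    have hAΩ : A ⊆ Ω := (hAsub.trans hballQ).trans hQΩ
    have hBΩ : B ⊆ Ω := (hBsub.trans hballQ).trans hQΩ
    -- first piece
    have hIA : ∫ w in A, ‖f w‖ ^ 2 ≤ ε⁻¹ * L := by
      have step1 : ∫ w in A, ‖f w‖ ^ 2 ≤ ∫ w in A, ε⁻¹ * (‖f w‖ ^ 2 * μ w) := by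
        apply setIntegral_mono_on (hf2int.mono_set hAsub)
          ((hfint.mono_set hAΩ).const_mul ε⁻¹) hAmeas
        intro w hw
        have hμw : ε ≤ μ w := hw.2
        have h1 : ‖f w‖ ^ 2 * ε ≤ ‖f w‖ ^ 2 * μ w :=
          mul_le_mul_of_nonneg_left hμw (by positivity)
        calc ‖f w‖ ^ 2 = ε⁻¹ * (‖f w‖ ^ 2 * ε) := by field_simp
          _ ≤ ε⁻¹ * (‖f w‖ ^ 2 * μ w) := by
              exact mul_le_mul_of_nonneg_left h1 (by positivity)
      rw [integral_const_mul] at step1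
      refine step1.trans ?_
      apply mul_le_mul_of_nonneg_left _ (by positivity)
      apply setIntegral_mono_set hfint
      · filter_upwards [ae_restrict_mem hΩ.measurableSet] with w hw
        have := (hpos w hw).le; positivity
      · exact HasSubset.Subset.eventuallyLE hAΩ
    -- second piece
    have hBQ : B ⊆ Q := hBsub.trans hballQ
    have hBfin : volume B ≠ ⊤ :=
      ((measure_mono hBsub).trans_lt measure_closedBall_lt_top).ne
    have hvolB : (volume B).toReal ≤ ε ^ a * I₀ := by
      have hconst : ∀ w ∈ B, (ε ^ a)⁻¹ ≤ μ w ^ (-a) := by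
        intro w hw
        have hμpos : 0 < μ w := hpos w (hBΩ hw)
        have h1 : μ w ^ a ≤ ε ^ a := Real.rpow_le_rpow hμpos.le hw.2.le ha.le
        rw [Real.rpow_neg hμpos.le]
        exact inv_anti₀ (Real.rpow_pos_of_pos hμpos a) h1
      have hkey := setIntegral_ge_of_const_le hBmeas hBfin hconst (hIQ.mono_set hBQ)
      have hI0b : ∫ w in B, μ w ^ (-a) ≤ I₀ := by
        apply setIntegral_mono_set hIQ
        · filter_upwards [ae_restrict_mem hQmeas] with w hw
          exact Real.rpow_nonneg (hpos w (hQΩ hw)).le _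
        · exact HasSubset.Subset.eventuallyLE hBQ
      have hεa0 : 0 < ε ^ a := Real.rpow_pos_of_pos hε0 a
      calc (volume B).toReal = ε ^ a * ((ε ^ a)⁻¹ * (volume B).toReal) := by field_simp
        _ ≤ ε ^ a * I₀ := mul_le_mul_of_nonneg_left (by rw [smul_eq_mul, mul_comm] at hkey; exact hkey.trans hI0b) hεa0.le
    have hfB : ∀ w ∈ B, ‖f w‖ ^ 2 ≤ S / r ^ b := by
      intro w hw
      have hwQ : w ∈ Q := hBQ hw
      have hdw : r ≤ δ - infDist w K := by
        have h1 : infDist w K ≤ infDist z₁ K + dist w z₁ := infDist_le_infDist_add_dist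
        have h2 : dist w z₁ ≤ r := (mem_ball.mp hw.1).le
        simp only [hr] at h2 ⊢
        linarith
      have h1 : r ^ b ≤ (δ - infDist w K) ^ b := Real.rpow_le_rpow hr0.le hdw hb0.le
      have h2 : g w ≤ S := hmax hwQ
      rw [le_div_iff₀ hrb0]
      calc ‖f w‖ ^ 2 * r ^ b ≤ ‖f w‖ ^ 2 * (δ - infDist w K) ^ b :=
            mul_le_mul_of_nonneg_left h1 (by positivity)
        _ = g w := by rw [hg]; ring
        _ ≤ S := h2
    have hIB : ∫ w in B, ‖f w‖ ^ 2 ≤ S / r ^ b * (ε ^ a * I₀) := by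
      have step1 : ∫ w in B, ‖f w‖ ^ 2 ≤ ∫ _w in B, S / r ^ b := by
        apply setIntegral_mono_on (hf2int.mono_set hBsub) _ hBmeas hfB
        exact (integrableOn_const_iff).mpr (Or.inr hBfin.lt_top)
      rw [setIntegral_const, smul_eq_mul] at step1
      refine step1.trans ?_
      rw [mul_comm (volume.real B)]
      exact mul_le_mul_of_nonneg_left hvolB (by positivity)
    -- combine
    have hsplit : ∫ w in ball z₁ r, ‖f w‖ ^ 2
        = (∫ w in A, ‖f w‖ ^ 2) + ∫ w in B, ‖f w‖ ^ 2 := by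
      rw [← setIntegral_union hdisj hBmeas (hf2int.mono_set hAsub) (hf2int.mono_set hBsub), hAB]
    have hmain : π * r ^ 2 * P ≤ ε⁻¹ * L + S / r ^ b * (ε ^ a * I₀) := by
      calc π * r ^ 2 * P ≤ ∫ w in ball z₁ r, ‖f w‖ ^ 2 := hsub
        _ = (∫ w in A, ‖f w‖ ^ 2) + ∫ w in B, ‖f w‖ ^ 2 := hsplit
        _ ≤ ε⁻¹ * L + S / r ^ b * (ε ^ a * I₀) := add_le_add hIA hIB
    -- multiply by k
    set k : ℝ := (2:ℝ) ^ b * r ^ b / (π * r ^ 2) with hk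
    have h2b0 : (0:ℝ) < (2:ℝ) ^ b := Real.rpow_pos_of_pos two_pos _
    have hk0 : 0 < k := by positivity
    have hSeq : S = k * (π * r ^ 2 * P) := by
      have hdz : δ - infDist z₁ K = 2 * r := by rw [hr]; ring
      have : S = ((2:ℝ) * r) ^ b * P := by simp only [hS, hg, hdz, hP]
      rw [this, Real.mul_rpow (by norm_num) hr0.le, hk]
      field_simp
    have hstep : k * (π * r ^ 2 * P) ≤ k * (ε⁻¹ * L + S / r ^ b * (ε ^ a * I₀)) :=
      mul_le_mul_of_nonneg_left hmain hk0.le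
    have hexp : k * (ε⁻¹ * L + S / r ^ b * (ε ^ a * I₀))
        = k * (ε⁻¹ * L) + k * (S / r ^ b * (ε ^ a * I₀)) := mul_add _ _ _
    have hk1 : k * ε⁻¹ = C₁ := by
      rw [hk, hε, hC₁, hrbsplit]
      rw [mul_inv]
      field_simp
    have h2b1 : (2:ℝ) ^ (b+1) = 2 * (2:ℝ) ^ b := by
      rw [Real.rpow_add two_pos, Real.rpow_one]; ring
    have hk2 : k * (S / r ^ b * (ε ^ a * I₀)) ≤ S / 2 := by
      have heq : k * (S / r ^ b * (ε ^ a * I₀)) = S * (I₀ / (I₀ + 1)) / 2 := by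
        rw [hk, hεa, hc₀a, h2b1]
        field_simp
      rw [heq]
      have h1 : S * (I₀ / (I₀ + 1)) ≤ S := by
        apply mul_le_of_le_one_right hS0
        rw [div_le_one (by linarith)]
        linarith
      linarith
    have e1 : k * (ε⁻¹ * L) = C₁ * L := by rw [← hk1]; ring
    linarith [hstep, hexp, hk2, hSeq, e1]
  have hSle : S ≤ 2 * (C₁ * L) := by linarith
  -- conclude
  intro z hz
  have hgz : δ ^ b * ‖f z‖ ^ 2 ≤ S := by
    have h : g z ≤ g z₁ := hmax (hKQ hz)
    have e : g z = δ ^ b * ‖f z‖ ^ 2 := by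
      simp only [hg, infDist_zero_of_mem hz, sub_zero]
    rw [e] at h
    rw [hS]
    exact h
  have hC2 : (Real.sqrt (2 * C₁ / δ ^ b)) ^ 2 = 2 * C₁ / δ ^ b :=
    Real.sq_sqrt (by positivity)
  have h2 : ‖f z‖ ^ 2 ≤ (Real.sqrt (2 * C₁ / δ ^ b)) ^ 2 * L := by
    rw [hC2, div_mul_eq_mul_div, le_div_iff₀ hδb]
    nlinarith [hgz, hSle]
  calc ‖f z‖ = Real.sqrt (‖f z‖ ^ 2) := (Real.sqrt_sq (norm_nonneg _)).symm
    _ ≤ Real.sqrt ((Real.sqrt (2 * C₁ / δ ^ b)) ^ 2 * L) := Real.sqrt_le_sqrt h2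
    _ = Real.sqrt (2 * C₁ / δ ^ b) * Real.sqrt L := by
        rw [Real.sqrt_mul (sq_nonneg _), Real.sqrt_sq (Real.sqrt_nonneg _)]

end MainProof
end
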